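/- Let F be a field, let n, m ≥ r ≥ 1 be integers and α ∈ [0,1]. Let A ∈ F^{n×m} be a matrix such that all but at most an α-fraction of its r×r submatrices are singular. Then there exists a matrix B ∈ F^{n×m} of rank less than r such that the number of entries where A and B differ is at most α^{1/r}·nm. -/

import Mathlib

open Finset
open scoped Classical

namespace Stmt15Aux

variable {F : Type*} [Field F] {n m : ℕ}


theorem rank_submatrix'' {k l k' l' : Type*} [Fintype k] [Fintype l] [Fintype k'] [Fintype l']
    (A : Matrix k l F) (e₁ : k' ≃ k) (e₂ : l' ≃ l) :
    (A.submatrix e₁ e₂).rank = A.rank := by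
  have h : A.submatrix (e₁ : k' → k) (e₂ : l' → l) = Matrix.reindex e₁.symm e₂.symm A := by
    simp [Matrix.reindex_apply]
  rw [h, Matrix.rank, Matrix.rank, Matrix.mulVecLin_reindex, LinearMap.range_comp,
    LinearMap.range_comp_of_range_eq_top _ (LinearEquiv.range _),
    LinearEquiv.finrank_map_eq]


theorem step (A : Matrix (Fin n) (Fin m) F) {r d k : ℕ} (hk : k < r)
    (hd : ∀ B : Matrix (Fin n) (Fin m) F, B.rank < r →
      d ≤ (univ.filter (fun p : Fin n × Fin m => A p.1 p.2 ≠ B p.1 p.2)).card)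
    (f : Fin k → Fin n) (g : Fin k → Fin m)
    (hdet : (A.submatrix f g).det ≠ 0) :
    d ≤ (univ.filter (fun p : Fin n × Fin m =>
        (A.submatrix (Fin.snoc f p.1) (Fin.snoc g p.2)).det ≠ 0)).card := by
  set M : Matrix (Fin k) (Fin k) F := A.submatrix f g with hM
  have hU : IsUnit M.det := isUnit_iff_ne_zero.mpr hdet
  haveI : Invertible M := M.invertibleOfIsUnitDet hU
  set B : Matrix (Fin n) (Fin m) F :=
    A.submatrix id g * M⁻¹ * A.submatrix f id with hB
  have hrB : B.rank < r := by
    have h1 : B.rank ≤ (M⁻¹ * A.submatrix f id).rank := by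
      rw [hB, Matrix.mul_assoc]
      exact Matrix.rank_mul_le_right _ _
    have h2 : (M⁻¹ * A.submatrix f id).rank ≤ k :=
      (Matrix.rank_le_card_height _).trans (by simp)
    omega
  refine (hd B hrB).trans (Finset.card_le_card ?_)
  intro p hp
  simp only [Finset.mem_filter, Finset.mem_univ, true_and] at hp ⊢
  obtain ⟨i, j⟩ := p
  have key : (A.submatrix (Fin.snoc f i) (Fin.snoc g j)).det = M.det * (A i j - B i j) := by
    have hblocks : (A.submatrix (Fin.snoc f i) (Fin.snoc g j)).submatrix
        (finSumFinEquiv : Fin k ⊕ Fin 1 ≃ Fin (k + 1))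
        (finSumFinEquiv : Fin k ⊕ Fin 1 ≃ Fin (k + 1)) =
        Matrix.fromBlocks M (Matrix.of fun l (_ : Fin 1) => A (f l) j)
          (Matrix.of fun (_ : Fin 1) q => A i (g q))
          (Matrix.of fun (_ : Fin 1) (_ : Fin 1) => A i j) := by
      have hcast : ∀ (a : Fin k), (finSumFinEquiv (Sum.inl a) : Fin (k + 1)) = Fin.castSucc a := by
        intro a; rfl
      have hlast : ∀ (b : Fin 1), (finSumFinEquiv (Sum.inr b) : Fin (k + 1)) = Fin.last k := by
        intro b
        apply Fin.ext
        simp [Fin.ext_iff, Fin.val_eq_zero b]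
      ext a b
      cases a with
      | inl a' =>
        cases b with
        | inl b' => simp [hcast, Fin.snoc_castSucc, hM]
        | inr b' => simp [hcast, hlast, Fin.snoc_castSucc, Fin.snoc_last]
      | inr a' =>
        cases b with
        | inl b' => simp [hcast, hlast, Fin.snoc_castSucc, Fin.snoc_last]
        | inr b' => simp [hlast, Fin.snoc_last]
    have hdeteq : (A.submatrix (Fin.snoc f i) (Fin.snoc g j)).det =
        (Matrix.fromBlocks M (Matrix.of fun l (_ : Fin 1) => A (f l) j)
          (Matrix.of fun (_ : Fin 1) q => A i (g q))
          (Matrix.of fun (_ : Fin 1) (_ : Fin 1) => A i j)).det := by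
      rw [← hblocks, Matrix.det_submatrix_equiv_self]
    rw [hdeteq, Matrix.det_fromBlocks₁₁]
    congr 1
    rw [Matrix.det_fin_one]
    simp only [Matrix.sub_apply, Matrix.of_apply, Matrix.invOf_eq_nonsing_inv]
    have hBij : ((Matrix.of fun (_ : Fin 1) q => A i (g q)) * M⁻¹ *
        Matrix.of fun l (_ : Fin 1) => A (f l) j) 0 0 = B i j := by
      rw [hB]
      simp [Matrix.mul_apply, Matrix.submatrix_apply]
    rw [hBij]
  rw [key]
  exact mul_ne_zero hdet (sub_ne_zero.mpr hp)


theorem castLE_succ {l k : ℕ} (hl : l ≤ k) (hl' : l ≤ k + 1) (x : Fin l) :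
    Fin.castLE hl' x = Fin.castSucc (Fin.castLE hl x) := rfl

theorem chains (A : Matrix (Fin n) (Fin m) F) {r d : ℕ}
    (hd : ∀ B : Matrix (Fin n) (Fin m) F, B.rank < r →
      d ≤ (univ.filter (fun p : Fin n × Fin m => A p.1 p.2 ≠ B p.1 p.2)).card) :
    ∀ k, k ≤ r →
      d ^ k ≤ (univ.filter (fun fg : (Fin k → Fin n) × (Fin k → Fin m) =>
        ∀ l (hl : l ≤ k),
          (A.submatrix (fg.1 ∘ Fin.castLE hl) (fg.2 ∘ Fin.castLE hl)).det ≠ 0)).card := by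
  intro k
  induction k with
  | zero =>
    intro _
    rw [pow_zero]
    refine Finset.card_pos.mpr ⟨(Fin.elim0, Fin.elim0), ?_⟩
    simp only [Finset.mem_filter, Finset.mem_univ, true_and]
    intro l hl
    obtain rfl : l = 0 := Nat.le_zero.mp hl
    rw [Matrix.det_fin_zero]
    exact one_ne_zero
  | succ k ih =>
    intro hk1
    have hkr : k < r := hk1
    have hk : k ≤ r := Nat.le_of_lt hkr
    set Ck := (univ.filter (fun fg : (Fin k → Fin n) × (Fin k → Fin m) =>
        ∀ l (hl : l ≤ k),
          (A.submatrix (fg.1 ∘ Fin.castLE hl) (fg.2 ∘ Fin.castLE hl)).det ≠ 0)) with hCk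
    set Ck1 := (univ.filter (fun fg : (Fin (k+1) → Fin n) × (Fin (k+1) → Fin m) =>
        ∀ l (hl : l ≤ k + 1),
          (A.submatrix (fg.1 ∘ Fin.castLE hl) (fg.2 ∘ Fin.castLE hl)).det ≠ 0)) with hCk1
    set τ : (Fin (k+1) → Fin n) × (Fin (k+1) → Fin m) →
        (Fin k → Fin n) × (Fin k → Fin m) :=
      fun fg => (fg.1 ∘ Fin.castSucc, fg.2 ∘ Fin.castSucc) with hτ
    have hmaps : ∀ fg ∈ Ck1, τ fg ∈ Ck := by
      intro fg hfg
      simp only [hCk1, hCk, Finset.mem_filter, Finset.mem_univ, true_and] at hfg ⊢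
      intro l hl
      have h2 := hfg l (hl.trans (Nat.le_succ k))
      have e1 : fg.1 ∘ Fin.castLE (hl.trans (Nat.le_succ k)) = (τ fg).1 ∘ Fin.castLE hl := by
        funext x; rfl
      have e2 : fg.2 ∘ Fin.castLE (hl.trans (Nat.le_succ k)) = (τ fg).2 ∘ Fin.castLE hl := by
        funext x; rfl
      rw [e1, e2] at h2
      exact h2
    rw [Finset.card_eq_sum_card_fiberwise hmaps]
    have hfiber : ∀ c ∈ Ck, d ≤ (Ck1.filter (fun x => τ x = c)).card := by
      rintro ⟨f, g⟩ hc
      simp only [hCk, Finset.mem_filter, Finset.mem_univ, true_and] at hc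
      have hdetc : (A.submatrix f g).det ≠ 0 := by
        have := hc k le_rfl
        have e1 : f ∘ Fin.castLE le_rfl = f := by funext x; rfl
        have e2 : g ∘ Fin.castLE le_rfl = g := by funext x; rfl
        rwa [e1, e2] at this
      refine (step A hkr hd f g hdetc).trans ?_
      refine Finset.card_le_card_of_injOn
        (fun p => (Fin.snoc f p.1, Fin.snoc g p.2)) ?_ ?_
      · intro p hp
        simp only [Finset.mem_coe, Finset.mem_filter, Finset.mem_univ, true_and] at hp
        simp only [hCk1, Finset.mem_coe, Finset.mem_filter, Finset.mem_univ, true_and]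
        constructor
        · intro l hl
          rcases Nat.lt_or_ge l (k+1) with hlt | hge
          · have hl' : l ≤ k := Nat.lt_succ_iff.mp hlt
            have e1 : Fin.snoc f p.1 ∘ Fin.castLE hl = f ∘ Fin.castLE hl' := by
              funext x
              simp only [Function.comp, castLE_succ hl', Fin.snoc_castSucc]
            have e2 : Fin.snoc g p.2 ∘ Fin.castLE hl = g ∘ Fin.castLE hl' := by
              funext x
              simp only [Function.comp, castLE_succ hl', Fin.snoc_castSucc]
            rw [e1, e2]
            exact hc l hl'
          · obtain rfl : l = k + 1 := le_antisymm hl hge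
            have e1 : Fin.snoc f p.1 ∘ Fin.castLE hl = Fin.snoc f p.1 := by
              funext x; rfl
            have e2 : Fin.snoc g p.2 ∘ Fin.castLE hl = Fin.snoc g p.2 := by
              funext x; rfl
            rw [e1, e2]
            exact hp
        · have e1 : Fin.snoc f p.1 ∘ Fin.castSucc = f := by
            funext x; simp [Fin.snoc_castSucc]
          have e2 : Fin.snoc g p.2 ∘ Fin.castSucc = g := by
            funext x; simp [Fin.snoc_castSucc]
          simp [hτ, e1, e2]
      · intro p _ q _ hpq
        simp only [Prod.mk.injEq] at hpq
        have h1 := congrFun hpq.1 (Fin.last k)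
        have h2 := congrFun hpq.2 (Fin.last k)
        simp only [Fin.snoc_last] at h1 h2
        exact Prod.ext h1 h2
    calc d ^ (k + 1) = d ^ k * d := by ring
    _ ≤ Ck.card * d := Nat.mul_le_mul_right d (ih hk)
    _ = ∑ _c ∈ Ck, d := by rw [Finset.sum_const, smul_eq_mul]
    _ ≤ ∑ c ∈ Ck, (Ck1.filter (fun x => τ x = c)).card := Finset.sum_le_sum hfiber

theorem tofinsets (A : Matrix (Fin n) (Fin m) F) (r : ℕ) :
    (univ.filter (fun fg : (Fin r → Fin n) × (Fin r → Fin m) =>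
        ∀ l (hl : l ≤ r),
          (A.submatrix (fg.1 ∘ Fin.castLE hl) (fg.2 ∘ Fin.castLE hl)).det ≠ 0)).card ≤
    (((univ.powersetCard r ×ˢ univ.powersetCard r).filter
        (fun st : Finset (Fin n) × Finset (Fin m) =>
          (A.submatrix (fun i : {x // x ∈ st.1} => i.1)
            (fun j : {x // x ∈ st.2} => j.1)).rank = r)).card) * (r.factorial * r.factorial) := by
  set s := (univ.filter (fun fg : (Fin r → Fin n) × (Fin r → Fin m) =>
        ∀ l (hl : l ≤ r),
          (A.submatrix (fg.1 ∘ Fin.castLE hl) (fg.2 ∘ Fin.castLE hl)).det ≠ 0)) with hs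
  set t := ((univ.powersetCard r ×ˢ univ.powersetCard r).filter
        (fun st : Finset (Fin n) × Finset (Fin m) =>
          (A.submatrix (fun i : {x // x ∈ st.1} => i.1)
            (fun j : {x // x ∈ st.2} => j.1)).rank = r)) with ht
  set ψ : (Fin r → Fin n) × (Fin r → Fin m) → Finset (Fin n) × Finset (Fin m) :=
    fun fg => (univ.image fg.1, univ.image fg.2) with hψ
  -- basic facts about chain elements
  have hbasic : ∀ fg ∈ s, (A.submatrix fg.1 fg.2).det ≠ 0 ∧
      Function.Injective fg.1 ∧ Function.Injective fg.2 := by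
    rintro ⟨f, g⟩ hfg
    simp only [hs, Finset.mem_filter, Finset.mem_univ, true_and] at hfg
    have hdet : (A.submatrix f g).det ≠ 0 := by
      have := hfg r le_rfl
      have e1 : f ∘ Fin.castLE le_rfl = f := by funext x; rfl
      have e2 : g ∘ Fin.castLE le_rfl = g := by funext x; rfl
      rwa [e1, e2] at this
    refine ⟨hdet, ?_, ?_⟩
    · intro a b hab
      by_contra hne
      exact hdet (Matrix.det_zero_of_row_eq hne (by
        funext q; exact congrArg (fun z => A z (g q)) hab))
    · intro a b hab
      by_contra hne
      exact hdet (Matrix.det_zero_of_column_eq hne (fun q =>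
        congrArg (fun z => A (f q) z) hab))
  rw [mul_comm]
  refine Finset.card_le_mul_card_image_of_maps_to (f := ψ) ?_ _ ?_
  · -- maps to
    rintro ⟨f, g⟩ hfg
    obtain ⟨hdet, hfinj, hginj⟩ := hbasic _ hfg
    have hScard : (univ.image f).card = r := by
      rw [Finset.card_image_of_injective _ hfinj, Finset.card_univ, Fintype.card_fin]
    have hTcard : (univ.image g).card = r := by
      rw [Finset.card_image_of_injective _ hginj, Finset.card_univ, Fintype.card_fin]
    simp only [ht, Finset.mem_filter, Finset.mem_product, Finset.mem_powersetCard_univ]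
    refine ⟨⟨hScard, hTcard⟩, ?_⟩
    -- rank condition
    have heS : ∀ l : Fin r, f l ∈ univ.image f := fun l => Finset.mem_image_of_mem _ (Finset.mem_univ l)
    have heT : ∀ l : Fin r, g l ∈ univ.image g := fun l => Finset.mem_image_of_mem _ (Finset.mem_univ l)
    set eS : Fin r ≃ {x // x ∈ univ.image f} :=
      Equiv.ofBijective (fun l => ⟨f l, heS l⟩)
        ⟨fun a b hab => hfinj (congrArg Subtype.val hab), by
          rintro ⟨x, hx⟩
          obtain ⟨l, -, rfl⟩ := Finset.mem_image.mp hx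
          exact ⟨l, rfl⟩⟩ with heSd
    set eT : Fin r ≃ {x // x ∈ univ.image g} :=
      Equiv.ofBijective (fun l => ⟨g l, heT l⟩)
        ⟨fun a b hab => hginj (congrArg Subtype.val hab), by
          rintro ⟨x, hx⟩
          obtain ⟨l, -, rfl⟩ := Finset.mem_image.mp hx
          exact ⟨l, rfl⟩⟩ with heTd
    have hsub : (A.submatrix (fun i : {x // x ∈ univ.image f} => i.1)
        (fun j : {x // x ∈ univ.image g} => j.1)).submatrix eS eT = A.submatrix f g := rfl
    have hrank := rank_submatrix'' (A.submatrix (fun i : {x // x ∈ univ.image f} => i.1)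
        (fun j : {x // x ∈ univ.image g} => j.1)) eS eT
    rw [hsub] at hrank
    rw [← hrank, Matrix.rank_of_isUnit _ ((Matrix.isUnit_iff_isUnit_det _).mpr
      (isUnit_iff_ne_zero.mpr hdet)), Fintype.card_fin]
  · -- fiber bound
    rintro ⟨S, T⟩ hst
    simp only [ht, Finset.mem_filter, Finset.mem_product, Finset.mem_powersetCard_univ] at hst
    obtain ⟨⟨hS, hT⟩, -⟩ := hst
    set fib := s.filter (fun fg => ψ fg = (S, T)) with hfib
    have hprop : ∀ fg ∈ fib, (Function.Injective fg.1 ∧ ∀ l, fg.1 l ∈ S) ∧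
        (Function.Injective fg.2 ∧ ∀ l, fg.2 l ∈ T) := by
      intro fg hfg
      simp only [hfib, Finset.mem_filter] at hfg
      obtain ⟨hfg1, hfg2⟩ := hfg
      obtain ⟨-, hfinj, hginj⟩ := hbasic _ hfg1
      have h1 : univ.image fg.1 = S := congrArg Prod.fst hfg2
      have h2 : univ.image fg.2 = T := congrArg Prod.snd hfg2
      exact ⟨⟨hfinj, fun l => h1 ▸ Finset.mem_image_of_mem _ (Finset.mem_univ l)⟩,
        ⟨hginj, fun l => h2 ▸ Finset.mem_image_of_mem _ (Finset.mem_univ l)⟩⟩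
    have hinj : Fintype.card ↥fib ≤
        Fintype.card ((Fin r ↪ {x // x ∈ S}) × (Fin r ↪ {x // x ∈ T})) := by
      refine Fintype.card_le_of_injective (fun x =>
        (⟨fun l => ⟨x.1.1 l, ((hprop x.1 x.2).1.2 l)⟩,
            fun a b hab => (hprop x.1 x.2).1.1 (congrArg Subtype.val hab)⟩,
         ⟨fun l => ⟨x.1.2 l, ((hprop x.1 x.2).2.2 l)⟩,
            fun a b hab => (hprop x.1 x.2).2.1 (congrArg Subtype.val hab)⟩)) ?_
      intro x y hxy
      simp only [Prod.mk.injEq, Function.Embedding.mk.injEq] at hxy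
      obtain ⟨h1, h2⟩ := hxy
      apply Subtype.ext
      apply Prod.ext
      · funext l
        exact congrArg Subtype.val (DFunLike.congr_fun h1 l)
      · funext l
        exact congrArg Subtype.val (DFunLike.congr_fun h2 l)
    rw [Fintype.card_coe] at hinj
    refine hinj.trans ?_
    rw [Fintype.card_prod, Fintype.card_embedding_eq, Fintype.card_embedding_eq,
      Fintype.card_coe, Fintype.card_coe, Fintype.card_fin, hS, hT, Nat.descFactorial_self]

theorem realstep {α : ℝ} (hα0 : 0 ≤ α) {r n m d N Cn Cm : ℕ} (hr : 1 ≤ r)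
    (hnat : d ^ r * (Cn * Cm) ≤ N * (n * m) ^ r)
    (hN : (N : ℝ) ≤ α * (Cn * Cm)) (hCn : 0 < Cn) (hCm : 0 < Cm) :
    (d : ℝ) ≤ α ^ ((1:ℝ)/r) * (n * m) := by
  have hCn' : (0:ℝ) < Cn := by exact_mod_cast hCn
  have hCm' : (0:ℝ) < Cm := by exact_mod_cast hCm
  have hCC : (0:ℝ) < (Cn:ℝ) * (Cm:ℝ) := mul_pos hCn' hCm'
  have hP : (0:ℝ) ≤ ((n:ℝ) * m) ^ r := by positivity
  have hc : (d:ℝ)^r * ((Cn:ℝ) * Cm) ≤ (N:ℝ) * ((n:ℝ)*m)^r := by exact_mod_cast hnat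
  have h5 : (d:ℝ)^r * ((Cn:ℝ)*Cm) ≤ (α * ((n:ℝ)*m)^r) * ((Cn:ℝ)*Cm) := by nlinarith
  have hdr : (d:ℝ)^r ≤ α * ((n:ℝ)*m)^r := le_of_mul_le_mul_right h5 hCC
  have hr0 : (r:ℝ) ≠ 0 := Nat.cast_ne_zero.mpr (by omega)
  have h6 : ((d:ℝ)^r) ^ ((1:ℝ)/r) ≤ (α * ((n:ℝ)*m)^r) ^ ((1:ℝ)/r) :=
    Real.rpow_le_rpow (by positivity) hdr (by positivity)
  have e1 : ((d:ℝ)^r) ^ ((1:ℝ)/r) = (d:ℝ) := by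
    rw [← Real.rpow_natCast (d:ℝ) r, ← Real.rpow_mul (by positivity), mul_one_div,
      div_self hr0, Real.rpow_one]
  have e2 : (α * ((n:ℝ)*m)^r) ^ ((1:ℝ)/r) = α ^ ((1:ℝ)/r) * ((n:ℝ)*m) := by
    rw [Real.mul_rpow hα0 hP]
    congr 1
    rw [← Real.rpow_natCast ((n:ℝ)*m) r, ← Real.rpow_mul (by positivity), mul_one_div,
      div_self hr0, Real.rpow_one]
  rw [e1, e2] at h6
  exact h6

end Stmt15Aux

open scoped Classical in
/-- Let `F` be a field, `n, m ≥ r ≥ 1`, `α ∈ [0,1]`, and let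
`A ∈ F^{n×m}` be a matrix such that all but at most an `α`-fraction of its `r×r`
submatrices (out of `binom(n,r)·binom(m,r)`, given by a choice of `r` rows and `r`
columns) are singular, i.e. at most `α·binom(n,r)·binom(m,r)` of them are nonsingular.
Then there is a matrix `B ∈ F^{n×m}` of rank less than `r` differing from `A` in at most
`α^{1/r}·nm` entries. -/
theorem stmt15 (F : Type*) [Field F] (n m r : ℕ) (hr : 1 ≤ r) (hrn : r ≤ n) (hrm : r ≤ m)
    (α : ℝ) (hα : α ∈ Set.Icc (0:ℝ) 1) (A : Matrix (Fin n) (Fin m) F)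
    (h : ((((Finset.univ : Finset (Fin n)).powersetCard r ×ˢ
          (Finset.univ : Finset (Fin m)).powersetCard r).filter
        (fun st => (A.submatrix (fun i : {x // x ∈ st.1} => i.1)
            (fun j : {x // x ∈ st.2} => j.1)).rank = r)).card : ℝ)
          ≤ α * ((n.choose r) * (m.choose r))) :
    ∃ B : Matrix (Fin n) (Fin m) F, B.rank < r ∧
      (((Finset.univ : Finset (Fin n × Fin m)).filter
          (fun p => A p.1 p.2 ≠ B p.1 p.2)).card : ℝ)
        ≤ α ^ ((1 : ℝ) / r) * (n * m) := by
  have hrank0 : (0 : Matrix (Fin n) (Fin m) F).rank < r := by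
    rw [Matrix.rank_zero]; omega
  set D : Set ℕ := {c | ∃ B : Matrix (Fin n) (Fin m) F, B.rank < r ∧
      ((Finset.univ : Finset (Fin n × Fin m)).filter
        (fun p => A p.1 p.2 ≠ B p.1 p.2)).card = c} with hD
  have hDne : D.Nonempty := ⟨_, 0, hrank0, rfl⟩
  obtain ⟨B₀, hB₀r, hB₀d⟩ := Nat.sInf_mem hDne
  have hd : ∀ B : Matrix (Fin n) (Fin m) F, B.rank < r →
      sInf D ≤ (Finset.univ.filter
        (fun p : Fin n × Fin m => A p.1 p.2 ≠ B p.1 p.2)).card :=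
    fun B hB => Nat.sInf_le ⟨B, hB, rfl⟩
  have hch := Stmt15Aux.chains A hd r le_rfl
  have htf := Stmt15Aux.tofinsets A r
  have h1 : sInf D ^ r ≤ (((Finset.univ : Finset (Fin n)).powersetCard r ×ˢ
          (Finset.univ : Finset (Fin m)).powersetCard r).filter
        (fun st => (A.submatrix (fun i : {x // x ∈ st.1} => i.1)
            (fun j : {x // x ∈ st.2} => j.1)).rank = r)).card * (r.factorial * r.factorial) :=
    hch.trans htf
  set N := (((Finset.univ : Finset (Fin n)).powersetCard r ×ˢ
          (Finset.univ : Finset (Fin m)).powersetCard r).filter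
        (fun st => (A.submatrix (fun i : {x // x ∈ st.1} => i.1)
            (fun j : {x // x ∈ st.2} => j.1)).rank = r)).card with hNdef
  have h2 : r.factorial * n.choose r ≤ n ^ r := by
    rw [← Nat.descFactorial_eq_factorial_mul_choose]
    exact Nat.descFactorial_le_pow _ _
  have h3 : r.factorial * m.choose r ≤ m ^ r := by
    rw [← Nat.descFactorial_eq_factorial_mul_choose]
    exact Nat.descFactorial_le_pow _ _
  have hnat : sInf D ^ r * (n.choose r * m.choose r) ≤ N * (n * m) ^ r := by
    calc sInf D ^ r * (n.choose r * m.choose r)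
        ≤ N * (r.factorial * r.factorial) * (n.choose r * m.choose r) :=
          Nat.mul_le_mul_right _ h1
      _ = N * ((r.factorial * n.choose r) * (r.factorial * m.choose r)) := by ring
      _ ≤ N * (n ^ r * m ^ r) := Nat.mul_le_mul_left _ (Nat.mul_le_mul h2 h3)
      _ = N * (n * m) ^ r := by rw [mul_pow]
  refine ⟨B₀, hB₀r, ?_⟩
  rw [hB₀d]
  exact Stmt15Aux.realstep hα.1 hr hnat h (Nat.choose_pos hrn) (Nat.choose_pos hrm)
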